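/- Let N > 0 and let X be a real random variable with law μ and E[X²] < ∞. Let q̄(z) = ∫_ℝ (πN)^{−1/2}·exp(−(z−x)²/N) dμ(x) be the density of X + W, where W ~ 𝒩(0, N/2) is independent of X, and let q₀(z) = (πN)^{−1/2}·exp(−z²/N). Then the Kullback–Leibler divergence (possibly +∞) satisfies D(q̄ ‖ q₀) = ∫_ℝ q̄(z)·log(q̄(z)/q₀(z)) dz ≥ E[X²]/N − ½·log(1 + 2·E[X²]/N). -/

import Mathlib

open MeasureTheory Real

/-- Density of the Gaussian distribution with mean `0` and variance `N/2`. -/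
noncomputable def q0 (N z : ℝ) : ℝ := (Real.sqrt (Real.pi * N))⁻¹ * Real.exp (-z ^ 2 / N)

/-- Density of the Gaussian distribution with mean `a` and variance `N/2`. -/
noncomputable def qa (N a z : ℝ) : ℝ := (Real.sqrt (Real.pi * N))⁻¹ * Real.exp (-(z - a) ^ 2 / N)

/-- The binary mixture density `½ q_a + ½ q_{-a}`. -/
noncomputable def qmix (N a z : ℝ) : ℝ := (1 / 2) * qa N a z + (1 / 2) * qa N (-a) z

/-- The log-likelihood ratio `log (q̃(z)/q₀(z))`. -/
noncomputable def llr (N a z : ℝ) : ℝ := Real.log (qmix N a z / q0 N z)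

lemma integrable_sq_mul_gauss {b : ℝ} (hb : 0 < b) :
    Integrable (fun y : ℝ => y ^ 2 * Real.exp (-b * y ^ 2)) := by
  have h := integrable_rpow_mul_exp_neg_mul_sq hb (by norm_num : (-1:ℝ) < 2)
  have : ∀ y : ℝ, y ^ (2:ℝ) = y ^ 2 := fun y => by
    rw [show (2:ℝ) = ((2:ℕ):ℝ) by norm_num, Real.rpow_natCast]
  simpa [this] using h

lemma integral_sq_mul_gauss {b : ℝ} (hb : 0 < b) :
    ∫ y : ℝ, y ^ 2 * Real.exp (-b * y ^ 2) = Real.sqrt (π / b) / (2 * b) := by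
  have hderiv : ∀ y : ℝ, HasDerivAt (fun y : ℝ => y * Real.exp (-b * y ^ 2))
      (Real.exp (-b * y ^ 2) - 2 * b * (y ^ 2 * Real.exp (-b * y ^ 2))) y := by
    intro y
    have h1 : HasDerivAt (fun y : ℝ => -b * y ^ 2) (-b * (2 * y)) y := by
      simpa using ((hasDerivAt_pow 2 y).const_mul (-b))
    have := ((hasDerivAt_id y).mul (h1.exp))
    refine this.congr_deriv ?_
    simp only [id_eq]
    ring
  have hint : Integrable (fun y : ℝ =>
      Real.exp (-b * y ^ 2) - 2 * b * (y ^ 2 * Real.exp (-b * y ^ 2))) :=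
    (integrable_exp_neg_mul_sq hb).sub ((integrable_sq_mul_gauss hb).const_mul _)
  have h0 := integral_eq_zero_of_hasDerivAt_of_integrable hderiv hint
    (integrable_mul_exp_neg_mul_sq hb)
  rw [integral_sub (integrable_exp_neg_mul_sq hb)
    ((integrable_sq_mul_gauss hb).const_mul _), integral_const_mul,
    integral_gaussian] at h0
  have hb' : (2:ℝ) * b ≠ 0 := by positivity
  field_simp at h0 ⊢
  linarith

lemma integral_id_mul_gauss {b : ℝ} (hb : 0 < b) :
    ∫ y : ℝ, y * Real.exp (-b * y ^ 2) = 0 := by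
  have hderiv : ∀ y : ℝ, HasDerivAt (fun y : ℝ => -(2*b)⁻¹ * Real.exp (-b * y ^ 2))
      (y * Real.exp (-b * y ^ 2)) y := by
    intro y
    have h1 : HasDerivAt (fun y : ℝ => -b * y ^ 2) (-b * (2 * y)) y := by
      simpa using ((hasDerivAt_pow 2 y).const_mul (-b))
    have := h1.exp.const_mul (-(2*b)⁻¹)
    refine this.congr_deriv ?_
    field_simp
  exact integral_eq_zero_of_hasDerivAt_of_integrable hderiv
    (integrable_mul_exp_neg_mul_sq hb)
    ((integrable_exp_neg_mul_sq hb).const_mul _)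

lemma qa_eq (N a z : ℝ) :
    qa N a z = (Real.sqrt (π * N))⁻¹ * Real.exp (-(1/N) * (z - a) ^ 2) := by
  have h : -(z - a) ^ 2 / N = -(1/N) * (z - a) ^ 2 := by ring
  rw [qa, h]

lemma qa_pos {N : ℝ} (hN : 0 < N) (a z : ℝ) : 0 < qa N a z := by
  unfold qa; positivity

lemma integrable_qa {N : ℝ} (hN : 0 < N) (a : ℝ) : Integrable (fun z => qa N a z) := by
  have hb : (0:ℝ) < 1/N := by positivity
  have h := ((integrable_exp_neg_mul_sq hb).const_mul ((Real.sqrt (π * N))⁻¹)).comp_sub_right a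
  exact h.congr (Filter.Eventually.of_forall fun z => (qa_eq N a z).symm)

lemma sqrt_pi_div_inv {N : ℝ} (hN : 0 < N) : Real.sqrt (π / (1/N)) = Real.sqrt (π * N) := by
  congr 1
  field_simp

lemma integral_qa {N : ℝ} (hN : 0 < N) (a : ℝ) : ∫ z : ℝ, qa N a z = 1 := by
  have hb : (0:ℝ) < 1/N := by positivity
  simp only [qa_eq]
  rw [show (∫ z : ℝ, (Real.sqrt (π * N))⁻¹ * Real.exp (-(1/N) * (z - a) ^ 2)) =
      ∫ z : ℝ, (fun y => (Real.sqrt (π * N))⁻¹ * Real.exp (-(1/N) * y ^ 2)) (z - a) from rfl,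
    integral_sub_right_eq_self (μ := volume)
      (fun y => (Real.sqrt (π * N))⁻¹ * Real.exp (-(1/N) * y ^ 2)) a,
    integral_const_mul, integral_gaussian, sqrt_pi_div_inv hN]
  rw [inv_mul_cancel₀]
  positivity

lemma sq_qa_eq {N : ℝ} (a : ℝ) : (fun z => z ^ 2 * qa N a z) =
    fun z => (fun y => (y + a) ^ 2 * ((Real.sqrt (π * N))⁻¹ * Real.exp (-(1/N) * y ^ 2))) (z - a) := by
  funext z
  simp only [qa_eq]
  congr 1
  ring

lemma F_expand {N a : ℝ} : (fun y : ℝ => (y + a) ^ 2 * ((Real.sqrt (π * N))⁻¹ * Real.exp (-(1/N) * y ^ 2)))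
    = fun y : ℝ => (Real.sqrt (π * N))⁻¹ * (y ^ 2 * Real.exp (-(1/N) * y ^ 2))
      + ((2 * a * (Real.sqrt (π * N))⁻¹) * (y * Real.exp (-(1/N) * y ^ 2))
      + (a ^ 2 * (Real.sqrt (π * N))⁻¹) * Real.exp (-(1/N) * y ^ 2)) := by
  funext y; ring

lemma integrable_F {N : ℝ} (hN : 0 < N) (a : ℝ) :
    Integrable (fun y : ℝ => (y + a) ^ 2 * ((Real.sqrt (π * N))⁻¹ * Real.exp (-(1/N) * y ^ 2))) := by
  have hb : (0:ℝ) < 1/N := by positivity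
  rw [F_expand]
  exact ((integrable_sq_mul_gauss hb).const_mul _).add
    (((integrable_mul_exp_neg_mul_sq hb).const_mul _).add
      ((integrable_exp_neg_mul_sq hb).const_mul _))

lemma integrable_sq_qa {N : ℝ} (hN : 0 < N) (a : ℝ) :
    Integrable (fun z => z ^ 2 * qa N a z) := by
  rw [sq_qa_eq]
  exact (integrable_F hN a).comp_sub_right a

lemma integral_sq_qa {N : ℝ} (hN : 0 < N) (a : ℝ) :
    ∫ z : ℝ, z ^ 2 * qa N a z = N / 2 + a ^ 2 := by
  have hb : (0:ℝ) < 1/N := by positivity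
  have h1 : ∫ z : ℝ, z ^ 2 * qa N a z =
      ∫ y : ℝ, (y + a) ^ 2 * ((Real.sqrt (π * N))⁻¹ * Real.exp (-(1/N) * y ^ 2)) := by
    rw [sq_qa_eq]
    exact integral_sub_right_eq_self (μ := volume)
      (fun y => (y + a) ^ 2 * ((Real.sqrt (π * N))⁻¹ * Real.exp (-(1/N) * y ^ 2))) a
  rw [h1, F_expand]
  have i1 : Integrable (fun y : ℝ =>
      (Real.sqrt (π * N))⁻¹ * (y ^ 2 * Real.exp (-(1/N) * y ^ 2))) :=
    (integrable_sq_mul_gauss hb).const_mul _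
  have i2 : Integrable (fun y : ℝ =>
      (2 * a * (Real.sqrt (π * N))⁻¹) * (y * Real.exp (-(1/N) * y ^ 2))) :=
    (integrable_mul_exp_neg_mul_sq hb).const_mul _
  have i3 : Integrable (fun y : ℝ =>
      (a ^ 2 * (Real.sqrt (π * N))⁻¹) * Real.exp (-(1/N) * y ^ 2)) :=
    (integrable_exp_neg_mul_sq hb).const_mul _
  have i23 : Integrable (fun y : ℝ =>
      (2 * a * (Real.sqrt (π * N))⁻¹) * (y * Real.exp (-(1/N) * y ^ 2))
      + (a ^ 2 * (Real.sqrt (π * N))⁻¹) * Real.exp (-(1/N) * y ^ 2)) := i2.add i3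
  rw [integral_add i1 i23, integral_add i2 i3,
    integral_const_mul, integral_const_mul, integral_const_mul,
    integral_sq_mul_gauss hb, integral_id_mul_gauss hb, integral_gaussian,
    sqrt_pi_div_inv hN]
  have hs : Real.sqrt (π * N) ≠ 0 := by positivity
  field_simp
  ring

open Real in
/-- The KL divergence (possibly `+∞`, i.e. non-integrable) from the density `q̄` of `X + W`,
where `X ~ μ` and `W ~ 𝒩(0, N/2)` are independent, to the Gaussian density `q₀` is at least
`E[X²]/N − ½ log(1 + 2 E[X²]/N)`. -/
theorem kl_mixture_lower_bound (N : ℝ) (hN : 0 < N) (μ : Measure ℝ)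
    [IsProbabilityMeasure μ] (hX : Integrable (fun x => x ^ 2) μ)
    (hInt : Integrable (fun z =>
      (∫ x, qa N x z ∂μ) * Real.log ((∫ x, qa N x z ∂μ) / q0 N z))) :
    (∫ x, x ^ 2 ∂μ) / N - (1 / 2) * Real.log (1 + 2 * (∫ x, x ^ 2 ∂μ) / N) ≤
      ∫ z : ℝ, (∫ x, qa N x z ∂μ) * Real.log ((∫ x, qa N x z ∂μ) / q0 N z) := by
  have hπN : (0:ℝ) < π * N := by positivity
  set m := ∫ x, x ^ 2 ∂μ with hm_def
  have hm : 0 ≤ m := by rw [hm_def]; exact integral_nonneg fun x => sq_nonneg x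
  set M := N + 2 * m with hM_def
  have hM : 0 < M := by rw [hM_def]; linarith
  have hπM : (0:ℝ) < π * M := by positivity
  set Q : ℝ → ℝ := fun z => ∫ x, qa N x z ∂μ with hQ_def
  show m / N - (1 / 2) * Real.log (1 + 2 * m / N) ≤
      ∫ z : ℝ, Q z * Real.log (Q z / q0 N z)
  have hInt' : Integrable (fun z => Q z * Real.log (Q z / q0 N z)) volume := hInt
  -- positivity of Q
  have hQpos : ∀ z, 0 < Q z := by
    intro z
    have hcont : Continuous fun x => qa N x z := by unfold qa; fun_prop
    have hint : Integrable (fun x => qa N x z) μ := by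
      refine Integrable.mono' (integrable_const ((Real.sqrt (π * N))⁻¹))
        hcont.aestronglyMeasurable (Filter.Eventually.of_forall fun x => ?_)
      rw [Real.norm_of_nonneg (qa_pos hN x z).le]
      unfold qa
      refine mul_le_of_le_one_right (by positivity) (Real.exp_le_one_iff.mpr ?_)
      exact div_nonpos_of_nonpos_of_nonneg (neg_nonpos.mpr (sq_nonneg _)) hN.le
    refine (integral_pos_iff_support_of_nonneg (fun x => (qa_pos hN x z).le) hint).mpr ?_
    have hsupp : (Function.support fun x => qa N x z) = Set.univ :=
      Set.eq_univ_of_forall fun x => (qa_pos hN x z).ne'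
    rw [hsupp]
    simp
  -- joint integrability and Fubini for Q
  have hFc : Continuous (fun p : ℝ × ℝ => qa N p.2 p.1) := by unfold qa; fun_prop
  have hProd : Integrable (fun p : ℝ × ℝ => qa N p.2 p.1) (volume.prod μ) := by
    rw [integrable_prod_iff' hFc.aestronglyMeasurable]
    refine ⟨Filter.Eventually.of_forall fun x => integrable_qa hN x, ?_⟩
    have h1 : (fun x : ℝ => ∫ z : ℝ, ‖qa N x z‖) = fun _ => (1:ℝ) := by
      funext x
      calc ∫ z : ℝ, ‖qa N x z‖ = ∫ z : ℝ, qa N x z := by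
            congr 1; funext z; exact Real.norm_of_nonneg (qa_pos hN x z).le
        _ = 1 := integral_qa hN x
    rw [h1]
    exact integrable_const 1
  have hQint : Integrable Q volume := hProd.integral_prod_left
  have hQ_one : ∫ z, Q z = 1 := by
    rw [hQ_def]
    rw [integral_integral_swap (f := fun z x => qa N x z) hProd]
    have h1 : (fun x : ℝ => ∫ z : ℝ, qa N x z) = fun _ => (1:ℝ) :=
      funext fun x => integral_qa hN x
    rw [h1]
    simp
  -- joint integrability and Fubini for z² Q
  have hF2c : Continuous (fun p : ℝ × ℝ => p.1 ^ 2 * qa N p.2 p.1) := by unfold qa; fun_prop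
  have hProd2 : Integrable (fun p : ℝ × ℝ => p.1 ^ 2 * qa N p.2 p.1) (volume.prod μ) := by
    rw [integrable_prod_iff' hF2c.aestronglyMeasurable]
    refine ⟨Filter.Eventually.of_forall fun x => integrable_sq_qa hN x, ?_⟩
    have h1 : (fun x : ℝ => ∫ z : ℝ, ‖z ^ 2 * qa N x z‖) = fun x : ℝ => N / 2 + x ^ 2 := by
      funext x
      calc ∫ z : ℝ, ‖z ^ 2 * qa N x z‖ = ∫ z : ℝ, z ^ 2 * qa N x z := by
            congr 1; funext z
            exact Real.norm_of_nonneg (mul_nonneg (sq_nonneg _) (qa_pos hN x z).le)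
        _ = N / 2 + x ^ 2 := integral_sq_qa hN x
    rw [h1]
    exact (integrable_const (N / 2)).add hX
  have hQ2int : Integrable (fun z => z ^ 2 * Q z) volume := by
    have h := hProd2.integral_prod_left
    refine h.congr (Filter.Eventually.of_forall fun z => ?_)
    simp only
    rw [integral_const_mul]
  have hQ2val : ∫ z, z ^ 2 * Q z = N / 2 + m := by
    have h1 : ∫ z, z ^ 2 * Q z = ∫ z, ∫ x, z ^ 2 * qa N x z ∂μ := by
      congr 1; funext z; rw [integral_const_mul]
    rw [h1, integral_integral_swap (f := fun z x => z ^ 2 * qa N x z) hProd2]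
    have h2 : (fun x : ℝ => ∫ z : ℝ, z ^ 2 * qa N x z) = fun x : ℝ => N / 2 + x ^ 2 :=
      funext fun x => integral_sq_qa hN x
    rw [h2, integral_add (integrable_const _) hX, integral_const]
    simp [hm_def]
  -- the competitor Gaussian of variance M/2
  have hgpos : ∀ z, 0 < q0 M z := fun z => by unfold q0; positivity
  have hg_as_qa : ∀ z, q0 M z = qa M 0 z := fun z => by simp [q0, qa]
  have hgint : Integrable (fun z => q0 M z) volume :=
    (integrable_qa hM 0).congr (Filter.Eventually.of_forall fun z => (hg_as_qa z).symm)
  have hg_one : ∫ z, q0 M z = 1 := by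
    rw [show (fun z => q0 M z) = fun z => qa M 0 z from funext hg_as_qa]
    exact integral_qa hM 0
  have hq0pos : ∀ z, 0 < q0 N z := fun z => by unfold q0; positivity
  set c : ℝ := (Real.log (π * N) - Real.log (π * M)) / 2 with hc_def
  set b : ℝ := 1 / N - 1 / M with hb_def
  have hlog : ∀ z, Real.log (q0 M z / q0 N z) = c + b * z ^ 2 := by
    intro z
    unfold q0
    rw [Real.log_div (by positivity) (by positivity),
      Real.log_mul (by positivity) (Real.exp_ne_zero _),
      Real.log_mul (by positivity) (Real.exp_ne_zero _),
      Real.log_exp, Real.log_exp, Real.log_inv, Real.log_inv,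
      Real.log_sqrt hπM.le, Real.log_sqrt hπN.le, hc_def, hb_def]
    field_simp
    ring
  have hGint : Integrable (fun z => Q z * Real.log (q0 M z / q0 N z)) volume := by
    have h : (fun z => Q z * Real.log (q0 M z / q0 N z))
        = fun z => c * Q z + b * (z ^ 2 * Q z) := funext fun z => by rw [hlog z]; ring
    rw [h]
    have h1 : Integrable (fun z => c * Q z) volume := hQint.const_mul c
    have h2 : Integrable (fun z => b * (z ^ 2 * Q z)) volume := hQ2int.const_mul b
    exact h1.add h2
  have hGval : ∫ z, Q z * Real.log (q0 M z / q0 N z) = c + b * (N / 2 + m) := by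
    have h : (fun z => Q z * Real.log (q0 M z / q0 N z))
        = fun z => c * Q z + b * (z ^ 2 * Q z) := funext fun z => by rw [hlog z]; ring
    have h1 : Integrable (fun z => c * Q z) volume := hQint.const_mul c
    have h2 : Integrable (fun z => b * (z ^ 2 * Q z)) volume := hQ2int.const_mul b
    rw [h, integral_add h1 h2, integral_const_mul, integral_const_mul, hQ_one, hQ2val]
    ring
  -- pointwise Gibbs inequality
  have hpt : ∀ z, Q z - q0 M z + Q z * Real.log (q0 M z / q0 N z)
      ≤ Q z * Real.log (Q z / q0 N z) := by
    intro z
    have hQz := hQpos z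
    have hgz := hgpos z
    have hq0z := hq0pos z
    have hsplit : Real.log (Q z / q0 N z)
        = Real.log (Q z / q0 M z) + Real.log (q0 M z / q0 N z) := by
      rw [Real.log_div hQz.ne' hq0z.ne', Real.log_div hQz.ne' hgz.ne',
        Real.log_div hgz.ne' hq0z.ne']
      ring
    rw [hsplit, mul_add]
    have h1 : Real.log (q0 M z / Q z) ≤ q0 M z / Q z - 1 :=
      Real.log_le_sub_one_of_pos (div_pos hgz hQz)
    have h2 : Real.log (Q z / q0 M z) = -Real.log (q0 M z / Q z) := by
      rw [Real.log_div hQz.ne' hgz.ne', Real.log_div hgz.ne' hQz.ne']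
      ring
    have h3 : Q z * (q0 M z / Q z - 1) = q0 M z - Q z := by field_simp
    have h4 := mul_le_mul_of_nonneg_left h1 hQz.le
    rw [h3] at h4
    rw [h2]
    nlinarith
  -- put everything together
  have hsum : Integrable (fun z => Q z - q0 M z + Q z * Real.log (q0 M z / q0 N z)) volume :=
    (hQint.sub hgint).add hGint
  have hmono : ∫ z, (Q z - q0 M z + Q z * Real.log (q0 M z / q0 N z))
      ≤ ∫ z, Q z * Real.log (Q z / q0 N z) := integral_mono hsum hInt' hpt
  have hintsub : Integrable (fun z => Q z - q0 M z) volume := hQint.sub hgint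
  rw [integral_add hintsub hGint, integral_sub hQint hgint, hQ_one, hg_one, hGval] at hmono
  -- compute the constant
  have hlogMN : Real.log (1 + 2 * m / N) = Real.log (π * M) - Real.log (π * N) := by
    have h : (1:ℝ) + 2 * m / N = (π * M) / (π * N) := by
      rw [hM_def]
      field_simp
    rw [h, Real.log_div hπM.ne' hπN.ne']
  have hval : c + b * (N / 2 + m) = m / N - (1 / 2) * Real.log (1 + 2 * m / N) := by
    rw [hlogMN, hc_def, hb_def, hM_def]
    field_simp
    ring
  linarith
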